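/- Let p > 0, m₁ > 0, 0 < β* < m₁, a* > 0, and set C* = β*·a*^(-p). Let I : [t*, ∞) → ℝ be a differentiable function with I(t) > 0 for all t ≥ t*, I(t*) = a*, and -C*·I(t)^(p+1) ≤ I'(t) ≤ m₁·I(t) - C*·I(t)^(p+1) for all t ≥ t*. Then for all t > t*: (a*^(-p) + p·C*·(t - t*))^(-1/p) ≤ I(t) ≤ (a*^(-p) - (a*^(-p) - C*/m₁)·(1 - exp(-p·m₁·(t - t*))))^(-1/p). In particular, I(t) decays at most at a polynomial rate of order t^(-1/p). -/

import Mathlib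

/-- Theorem 3.6, part (1) (the Classic case p > 0): with C* = β*·a*^(-p), β* < m₁,
a* = I(t*) and -C*·I^(p+1) ≤ I' ≤ m₁·I - C*·I^(p+1) for t ≥ t*, the adopter fraction
satisfies the stated two-sided polynomial bound for t > t*. -/
theorem classic_two_sided_bound (p m₁ βstar astar tstar : ℝ)
    (hp : 0 < p) (hm1 : 0 < m₁) (hβpos : 0 < βstar) (hβlt : βstar < m₁)
    (hastar : 0 < astar)
    (Cstar : ℝ) (hCstar : Cstar = βstar * astar ^ (-p))
    (I I' : ℝ → ℝ)
    (hderiv : ∀ t ≥ tstar, HasDerivAt I (I' t) t)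
    (hpos : ∀ t ≥ tstar, 0 < I t)
    (hinit : I tstar = astar)
    (hineq : ∀ t ≥ tstar,
      -Cstar * I t ^ (p + 1) ≤ I' t ∧ I' t ≤ m₁ * I t - Cstar * I t ^ (p + 1)) :
    ∀ t > tstar,
      (astar ^ (-p) + p * Cstar * (t - tstar)) ^ (-1 / p) ≤ I t ∧
      I t ≤ (astar ^ (-p) -
        (astar ^ (-p) - Cstar / m₁) * (1 - Real.exp (-p * m₁ * (t - tstar)))) ^ (-1 / p) := by
  have hCpos : 0 < Cstar := by rw [hCstar]; positivity
  -- derivative of y = I^(-p)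
  have hy : ∀ s ∈ Set.Ici tstar, HasDerivAt (fun u => I u ^ (-p))
      (I' s * (-p) * I s ^ (-p - 1)) s := fun s hs =>
    (hderiv s hs).rpow_const (Or.inl (hpos s hs).ne')
  -- key pointwise inequalities on y'
  have key : ∀ s ∈ Set.Ici tstar,
      p * Cstar - p * m₁ * I s ^ (-p) ≤ I' s * (-p) * I s ^ (-p - 1) ∧
      I' s * (-p) * I s ^ (-p - 1) ≤ p * Cstar := by
    intro s hs
    have hIs : 0 < I s := hpos s hs
    have h1 : I s ^ (-p - 1) * I s ^ (p + 1) = 1 := by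
      rw [← Real.rpow_add hIs]; norm_num
    have h2 : I s ^ (-p - 1) * I s = I s ^ (-p) := by
      nth_rewrite 2 [← Real.rpow_one (I s)]
      rw [← Real.rpow_add hIs]; ring_nf
    have hfac : 0 < I s ^ (-p - 1) := Real.rpow_pos_of_pos hIs _
    obtain ⟨hl, hu⟩ := hineq s hs
    have e1 : p * I s ^ (-p - 1) * (-Cstar * I s ^ (p + 1)) = -(p * Cstar) := by
      linear_combination (-(p * Cstar)) * h1
    have e2 : p * I s ^ (-p - 1) * (m₁ * I s - Cstar * I s ^ (p + 1))
        = p * m₁ * I s ^ (-p) - p * Cstar := by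
      linear_combination (p * m₁) * h2 + (-(p * Cstar)) * h1
    constructor
    · have hk := mul_le_mul_of_nonneg_left hu (mul_pos hp hfac).le
      rw [e2] at hk
      linarith
    · have hk := mul_le_mul_of_nonneg_left hl (mul_pos hp hfac).le
      rw [e1] at hk
      linarith
  have hIci : Convex ℝ (Set.Ici tstar) := convex_Ici tstar
  -- Lower bound: F u = I u ^(-p) - p*Cstar*u is antitone on Ici tstar
  have hF : AntitoneOn (fun u => I u ^ (-p) - p * Cstar * u) (Set.Ici tstar) := by
    have hder : ∀ s ∈ Set.Ici tstar,
        HasDerivAt (fun u => I u ^ (-p) - p * Cstar * u)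
          (I' s * (-p) * I s ^ (-p - 1) - p * Cstar) s := fun s hs => by
      exact ((hy s hs).sub ((hasDerivAt_id s).const_mul (p * Cstar))).congr_deriv (by ring)
    apply antitoneOn_of_deriv_nonpos hIci
    · exact fun s hs => (hder s hs).continuousAt.continuousWithinAt
    · intro s hs
      rw [interior_Ici] at hs
      exact (hder s (Set.mem_Ici.mpr (le_of_lt hs))).differentiableAt.differentiableWithinAt
    · intro s hs
      rw [interior_Ici] at hs
      rw [(hder s (Set.mem_Ici.mpr (le_of_lt hs))).deriv]
      have := (key s (Set.mem_Ici.mpr (le_of_lt hs))).2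
      linarith
  -- Upper bound: G u = exp(p*m₁*u) * (I u ^(-p) - Cstar/m₁) is monotone
  have hG : MonotoneOn (fun u => Real.exp (p * m₁ * u) * (I u ^ (-p) - Cstar / m₁))
      (Set.Ici tstar) := by
    have hder : ∀ s ∈ Set.Ici tstar,
        HasDerivAt (fun u => Real.exp (p * m₁ * u) * (I u ^ (-p) - Cstar / m₁))
          (Real.exp (p * m₁ * s) * (p * m₁) * (I s ^ (-p) - Cstar / m₁) +
            Real.exp (p * m₁ * s) * (I' s * (-p) * I s ^ (-p - 1))) s := by
      intro s hs
      have he : HasDerivAt (fun u => Real.exp (p * m₁ * u))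
          (Real.exp (p * m₁ * s) * (p * m₁)) s :=
        (((hasDerivAt_id s).const_mul (p * m₁)).congr_deriv (by ring)).exp
      exact he.mul ((hy s hs).sub_const (Cstar / m₁))
    apply monotoneOn_of_deriv_nonneg hIci
    · exact fun s hs => (hder s hs).continuousAt.continuousWithinAt
    · intro s hs
      rw [interior_Ici] at hs
      exact (hder s (Set.mem_Ici.mpr (le_of_lt hs))).differentiableAt.differentiableWithinAt
    · intro s hs
      rw [interior_Ici] at hs
      rw [(hder s (Set.mem_Ici.mpr (le_of_lt hs))).deriv]
      have hk := (key s (Set.mem_Ici.mpr (le_of_lt hs))).1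
      have he : 0 < Real.exp (p * m₁ * s) := Real.exp_pos _
      have hk' := mul_le_mul_of_nonneg_left hk he.le
      have e3 : Real.exp (p * m₁ * s) * (p * m₁) * (I s ^ (-p) - Cstar / m₁) +
          Real.exp (p * m₁ * s) * (p * Cstar - p * m₁ * I s ^ (-p)) = 0 := by
        field_simp
        ring
      linarith
  intro t ht
  have htt : tstar ≤ t := le_of_lt ht
  have hIt : 0 < I t := hpos t htt
  have hyt : 0 < I t ^ (-p) := Real.rpow_pos_of_pos hIt _
  have hytstar : I tstar ^ (-p) = astar ^ (-p) := by rw [hinit]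
  -- y t ≤ astar^(-p) + p*Cstar*(t - tstar)
  have hle1 : I t ^ (-p) ≤ astar ^ (-p) + p * Cstar * (t - tstar) := by
    have := hF (Set.self_mem_Ici) (Set.mem_Ici.mpr htt) htt
    simp only [hytstar] at this
    linarith
  -- y t ≥ astar^(-p) - (astar^(-p) - Cstar/m₁)*(1 - exp(-p*m₁*(t-tstar)))
  have hge1 : astar ^ (-p) -
      (astar ^ (-p) - Cstar / m₁) * (1 - Real.exp (-p * m₁ * (t - tstar))) ≤ I t ^ (-p) := by
    have hGle := hG (Set.self_mem_Ici) (Set.mem_Ici.mpr htt) htt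
    simp only [hytstar] at hGle
    have hexp : Real.exp (p * m₁ * tstar) =
        Real.exp (p * m₁ * t) * Real.exp (-p * m₁ * (t - tstar)) := by
      rw [← Real.exp_add]; ring_nf
    have het : 0 < Real.exp (p * m₁ * t) := Real.exp_pos _
    rw [hexp] at hGle
    have : Real.exp (-p * m₁ * (t - tstar)) * (astar ^ (-p) - Cstar / m₁)
        ≤ I t ^ (-p) - Cstar / m₁ := by
      have := (mul_le_mul_iff_right₀ het).mp (by linarith [hGle] : Real.exp (p * m₁ * t) *
        (Real.exp (-p * m₁ * (t - tstar)) * (astar ^ (-p) - Cstar / m₁)) ≤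
        Real.exp (p * m₁ * t) * (I t ^ (-p) - Cstar / m₁))
      linarith
    nlinarith
  -- positivity of the upper-bound base
  have hbpos : 0 < astar ^ (-p) -
      (astar ^ (-p) - Cstar / m₁) * (1 - Real.exp (-p * m₁ * (t - tstar))) := by
    have ha : 0 < astar ^ (-p) := Real.rpow_pos_of_pos hastar _
    have hCm : 0 < Cstar / m₁ := div_pos hCpos hm1
    have hCm2 : Cstar / m₁ < astar ^ (-p) := by
      rw [hCstar, div_lt_iff₀ hm1]
      nlinarith
    have he1 : 0 < Real.exp (-p * m₁ * (t - tstar)) := Real.exp_pos _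
    have he2 : Real.exp (-p * m₁ * (t - tstar)) ≤ 1 := by
      rw [Real.exp_le_one_iff]
      nlinarith [mul_pos (mul_pos hp hm1) (sub_pos.mpr ht)]
    nlinarith
  -- convert y-bounds to I-bounds via x ↦ x^(-1/p)
  have hIy : (I t ^ (-p)) ^ (-1 / p) = I t := by
    rw [← Real.rpow_mul hIt.le, show -p * (-1 / p) = 1 by field_simp, Real.rpow_one]
  constructor
  · rw [← hIy]
    apply Real.rpow_le_rpow_of_nonpos hyt hle1
    · have : 0 < p := hp
      rw [neg_div]
      exact neg_nonpos_of_nonneg (by positivity)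
  · rw [← hIy]
    apply Real.rpow_le_rpow_of_nonpos hbpos hge1
    rw [neg_div]
    exact neg_nonpos_of_nonneg (by positivity)
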